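/- arXiv:2006.03627 — 2 statements merged into one kernel-verified Lean document; each statement's English description precedes it below -/
import Mathlib

section
/- If W_H ∈ ℝ^{P×P} is equivariant to the H-action on P and W_K ∈ ℝ^{Q×Q} is equivariant to the K-action on Q, then W = W_H ⊗ (1_Q 1_Q^⊤) + I_P ⊗ W_K is equivariant to the imprimitive action of K ≀ H on P × Q, i.e., W commutes with the permutation matrix of every element of K ≀ H. -/
open Matrix Kronecker

/-- Permutation matrix of `σ` (row convention matching `(Γ^(g)x)_n = x_{g·n}`):
entry `(i,j)` is 1 iff `j = σ i`. -/
noncomputable def permMat {n : Type*} [Fintype n] [DecidableEq n] (σ : Equiv.Perm n) :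
    Matrix n n ℝ := Matrix.of fun i j => if j = σ i then (1 : ℝ) else 0

/-- The permutation matrix `G^(g) = Σ_{p=1}^P 1_{p, h·p} ⊗ G^{(k_p)}` of the imprimitive
action of the wreath product element `g = (h, (k_p)_p) ∈ K ≀ H` on `ℝ^{PQ}`. -/
noncomputable def wreathMat {H P K Q : Type*} [Group H] [Group K]
    [Fintype P] [DecidableEq P] [Fintype Q] [DecidableEq Q]
    (ρ : H →* Equiv.Perm P) (τ : K →* Equiv.Perm Q) (h : H) (b : P → K) :
    Matrix (P × Q) (P × Q) ℝ :=
  ∑ p : P, (Matrix.single p (ρ h p) (1 : ℝ)) ⊗ₖ permMat (τ (b p))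

lemma permMat_eq_sum {n : Type*} [Fintype n] [DecidableEq n] (σ : Equiv.Perm n) :
    permMat σ = ∑ i, Matrix.single i (σ i) (1 : ℝ) := by
  ext i j
  simp only [Matrix.sum_apply, Matrix.single, permMat, Matrix.of_apply]
  rw [Finset.sum_eq_single i]
  · simp [eq_comm]
  · intro b _ hb; simp [hb]
  · simp

lemma permMat_mul_J {n : Type*} [Fintype n] [DecidableEq n] (σ : Equiv.Perm n) :
    permMat σ * vecMulVec (fun _ : n => (1 : ℝ)) (fun _ : n => (1 : ℝ)) =
      vecMulVec (fun _ : n => (1 : ℝ)) (fun _ : n => (1 : ℝ)) := by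
  ext i j
  simp [Matrix.mul_apply, permMat, vecMulVec]

lemma J_mul_permMat {n : Type*} [Fintype n] [DecidableEq n] (σ : Equiv.Perm n) :
    vecMulVec (fun _ : n => (1 : ℝ)) (fun _ : n => (1 : ℝ)) * permMat σ =
      vecMulVec (fun _ : n => (1 : ℝ)) (fun _ : n => (1 : ℝ)) := by
  ext i j
  simp only [Matrix.mul_apply, permMat, vecMulVec, Matrix.of_apply, one_mul]
  rw [Finset.sum_eq_single (σ.symm j)] <;> simp +contextual [Equiv.eq_symm_apply, eq_comm]

lemma sum_kronecker' {P Q : Type*} [Fintype P] [DecidableEq P] [Fintype Q]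
    (A : P → Matrix P P ℝ) (B : Matrix Q Q ℝ) :
    (∑ p : P, A p) ⊗ₖ B = ∑ p : P, A p ⊗ₖ B := by
  ext i j
  simp [Matrix.sum_apply, Finset.sum_mul]


/-- If `W_H` is `H`-equivariant and `W_K` is `K`-equivariant, then
`W = W_H ⊗ (1_Q 1_Q^⊤) + I_P ⊗ W_K` is equivariant to the imprimitive action of `K ≀ H` on
`P × Q`, i.e. it commutes with the permutation matrix of every element of `K ≀ H`. -/
theorem wreath_equivariant_sum
    {H P K Q : Type*} [Group H] [Group K]
    [Fintype P] [DecidableEq P] [Fintype Q] [DecidableEq Q]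
    (ρ : H →* Equiv.Perm P) (τ : K →* Equiv.Perm Q)
    (WH : Matrix P P ℝ) (WK : Matrix Q Q ℝ)
    (hWH : ∀ h : H, permMat (ρ h) * WH = WH * permMat (ρ h))
    (hWK : ∀ k : K, permMat (τ k) * WK = WK * permMat (τ k)) :
    ∀ (h : H) (b : P → K),
      wreathMat ρ τ h b *
          (WH ⊗ₖ vecMulVec (fun _ : Q => (1 : ℝ)) (fun _ : Q => (1 : ℝ)) +
            (1 : Matrix P P ℝ) ⊗ₖ WK) =
        (WH ⊗ₖ vecMulVec (fun _ : Q => (1 : ℝ)) (fun _ : Q => (1 : ℝ)) +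
            (1 : Matrix P P ℝ) ⊗ₖ WK) * wreathMat ρ τ h b := by
  intro h b
  set J := vecMulVec (fun _ : Q => (1 : ℝ)) (fun _ : Q => (1 : ℝ)) with hJ
  unfold wreathMat
  rw [Finset.sum_mul, Finset.mul_sum]
  have lhs_eq : ∀ p : P,
      (Matrix.single p (ρ h p) (1 : ℝ)) ⊗ₖ permMat (τ (b p)) *
        (WH ⊗ₖ J + (1 : Matrix P P ℝ) ⊗ₖ WK) =
      (Matrix.single p (ρ h p) (1 : ℝ) * WH) ⊗ₖ J +
        (Matrix.single p (ρ h p) (1 : ℝ)) ⊗ₖ (WK * permMat (τ (b p))) := by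
    intro p
    rw [mul_add, ← Matrix.mul_kronecker_mul, ← Matrix.mul_kronecker_mul,
      permMat_mul_J, mul_one, hWK]
  have rhs_eq : ∀ p : P,
      (WH ⊗ₖ J + (1 : Matrix P P ℝ) ⊗ₖ WK) *
        ((Matrix.single p (ρ h p) (1 : ℝ)) ⊗ₖ permMat (τ (b p))) =
      (WH * Matrix.single p (ρ h p) (1 : ℝ)) ⊗ₖ J +
        (Matrix.single p (ρ h p) (1 : ℝ)) ⊗ₖ (WK * permMat (τ (b p))) := by
    intro p
    rw [add_mul, ← Matrix.mul_kronecker_mul, ← Matrix.mul_kronecker_mul,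
      J_mul_permMat, one_mul]
  simp only [lhs_eq, rhs_eq, Finset.sum_add_distrib]
  congr 1
  rw [← sum_kronecker', ← sum_kronecker', ← Finset.sum_mul, ← Finset.mul_sum,
    ← permMat_eq_sum, hWH]
end

section
/- Let H act transitively on a set of size P with the space of H-equivariant linear maps on ℝ^P having dimension H, and let K act transitively on a set of size Q with equivariant-map space of dimension K. Then the dimension of the space of linear maps on ℝ^{PQ} equivariant to the imprimitive action of the wreath product K ≀ H equals H + K − 1. -/
open Matrix Kronecker

/-- The space of linear maps commuting with all permutation matrices of a `G`-action. -/
noncomputable def commutantSubmodule {G N : Type*} [Group G] [Fintype N] [DecidableEq N]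
    (ρ : G →* Equiv.Perm N) : Submodule ℝ (Matrix N N ℝ) :=
  ⨅ g : G, LinearMap.ker
    (LinearMap.mulLeft ℝ (permMat (ρ g)) - LinearMap.mulRight ℝ (permMat (ρ g)))

/-- The space of linear maps on `ℝ^{PQ}` commuting with the permutation matrices of the
imprimitive action of every element of the wreath product `K ≀ H`. -/
noncomputable def wreathCommutantSubmodule {H P K Q : Type*} [Group H] [Group K]
    [Fintype P] [DecidableEq P] [Fintype Q] [DecidableEq Q]
    (ρ : H →* Equiv.Perm P) (τ : K →* Equiv.Perm Q) :
    Submodule ℝ (Matrix (P × Q) (P × Q) ℝ) :=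
  ⨅ (h : H) (b : P → K), LinearMap.ker
    (LinearMap.mulLeft ℝ (wreathMat ρ τ h b) - LinearMap.mulRight ℝ (wreathMat ρ τ h b))


section Inv
variable {X : Type*} [Fintype X]

/-- Submodule of functions invariant under a setoid's relation. -/
def invSubmodule (s : Setoid X) : Submodule ℝ (X → ℝ) where
  carrier := {f | ∀ x y, s.r x y → f x = f y}
  add_mem' := fun hf hg x y h => by simp [hf x y h, hg x y h]
  zero_mem' := fun x y h => rfl
  smul_mem' := fun c f hf x y h => by simp [hf x y h]

noncomputable def invEquiv (s : Setoid X) : invSubmodule s ≃ₗ[ℝ] (Quotient s → ℝ) where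
  toFun f := Quotient.lift f.1 f.2
  invFun g := ⟨fun x => g ⟦x⟧, fun x y h => congrArg g (Quotient.sound h)⟩
  map_add' f g := by ext q; induction q using Quotient.ind; rfl
  map_smul' c f := by ext q; induction q using Quotient.ind; rfl
  left_inv f := by ext x; rfl
  right_inv g := by ext q; induction q using Quotient.ind; rfl

lemma finrank_invSubmodule (s : Setoid X) :
    Module.finrank ℝ (invSubmodule s) = Nat.card (Quotient s) := by
  haveI : Fintype (Quotient s) := Fintype.ofFinite _
  rw [(invEquiv s).finrank_eq, Module.finrank_fintype_fun_eq_card, Nat.card_eq_fintype_card]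

end Inv

section Mat
variable {N : Type*} [Fintype N] [DecidableEq N]

noncomputable def matFunEquiv (N : Type*) [Fintype N] :
    Matrix N N ℝ ≃ₗ[ℝ] ((N × N) → ℝ) where
  toFun A := fun x => A x.1 x.2
  invFun f := Matrix.of fun i j => f (i, j)
  map_add' _ _ := rfl
  map_smul' _ _ := rfl
  left_inv A := rfl
  right_inv f := rfl

lemma permMat_mul_apply (σ : Equiv.Perm N) (A : Matrix N N ℝ) (i j : N) :
    (permMat σ * A) i j = A (σ i) j := by
  simp [permMat, Matrix.mul_apply]

lemma mul_permMat_apply (σ : Equiv.Perm N) (A : Matrix N N ℝ) (i j : N) :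
    (A * permMat σ) i j = A i (σ.symm j) := by
  simp only [permMat, Matrix.mul_apply, Matrix.of_apply, mul_ite, mul_one, mul_zero]
  rw [Finset.sum_eq_single (σ.symm j)] <;> simp +contextual [Equiv.eq_symm_apply, eq_comm]

lemma mem_ker_comm_iff (σ : Equiv.Perm N) (A : Matrix N N ℝ) :
    A ∈ LinearMap.ker (LinearMap.mulLeft ℝ (permMat σ) - LinearMap.mulRight ℝ (permMat σ))
      ↔ ∀ x y, A (σ x) (σ y) = A x y := by
  rw [LinearMap.mem_ker, LinearMap.sub_apply, sub_eq_zero, LinearMap.mulLeft_apply,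
    LinearMap.mulRight_apply]
  constructor
  · intro h x y
    have h2 := congrFun (congrFun h x) (σ y)
    rw [permMat_mul_apply, mul_permMat_apply, Equiv.symm_apply_apply] at h2
    exact h2
  · intro h
    ext i j
    rw [permMat_mul_apply, mul_permMat_apply]
    have := h i (σ.symm j)
    rwa [Equiv.apply_symm_apply] at this
end Mat
section Core
variable {N : Type*} [Fintype N] [DecidableEq N]

lemma finrank_eq_card_quot (V : Submodule ℝ (Matrix N N ℝ)) (s : Setoid (N × N))
    (hmem : ∀ A : Matrix N N ℝ, A ∈ V ↔ ∀ x y, s.r x y → A x.1 x.2 = A y.1 y.2) :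
    Module.finrank ℝ V = Nat.card (Quotient s) := by
  have hmap : V.map (matFunEquiv N : Matrix N N ℝ →ₗ[ℝ] ((N × N) → ℝ)) = invSubmodule s := by
    ext f
    simp only [Submodule.mem_map]
    constructor
    · rintro ⟨A, hA, rfl⟩
      intro x y hxy
      exact (hmem A).1 hA x y hxy
    · intro hf
      refine ⟨(matFunEquiv N).symm f, ?_, by simp⟩
      rw [hmem]
      intro x y hxy
      exact hf x y hxy
  have h2 := LinearEquiv.finrank_map_eq (matFunEquiv N) V
  rw [hmap, finrank_invSubmodule] at h2
  exact h2.symm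

/-- The diagonal-orbit setoid on `N × N`. -/
def pairSetoid {G : Type*} [Group G] (ρ : G →* Equiv.Perm N) : Setoid (N × N) where
  r x y := ∃ g : G, (ρ g x.1, ρ g x.2) = y
  iseqv := by
    refine ⟨fun x => ⟨1, by simp⟩, ?_, ?_⟩
    · rintro x y ⟨g, rfl⟩
      exact ⟨g⁻¹, by simp⟩
    · rintro x y z ⟨g, rfl⟩ ⟨g', rfl⟩
      exact ⟨g' * g, by simp⟩

lemma mem_commutant_iff {G : Type*} [Group G] (ρ : G →* Equiv.Perm N) (A : Matrix N N ℝ) :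
    A ∈ commutantSubmodule ρ ↔ ∀ x y, (pairSetoid ρ).r x y → A x.1 x.2 = A y.1 y.2 := by
  simp only [commutantSubmodule, Submodule.mem_iInf, mem_ker_comm_iff]
  constructor
  · rintro h x y ⟨g, rfl⟩
    exact (h g x.1 x.2).symm
  · intro h g i j
    exact (h (i, j) (ρ g i, ρ g j) ⟨g, rfl⟩).symm

lemma finrank_commutant {G : Type*} [Group G] (ρ : G →* Equiv.Perm N) :
    Module.finrank ℝ (commutantSubmodule ρ) = Nat.card (Quotient (pairSetoid ρ)) :=
  finrank_eq_card_quot _ _ (mem_commutant_iff ρ)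
end Core
section Wreath
variable {H P K Q : Type*} [Group H] [Group K]
    [Fintype P] [DecidableEq P] [Fintype Q] [DecidableEq Q]
    (ρ : H →* Equiv.Perm P) (τ : K →* Equiv.Perm Q)

/-- The permutation of `P × Q` induced by a wreath product element `(h, b)`. -/
def wreathPerm (h : H) (b : P → K) : Equiv.Perm (P × Q) :=
  Equiv.prodShear (ρ h) (fun p => τ (b p))

@[simp] lemma wreathPerm_apply (h : H) (b : P → K) (x : P × Q) :
    wreathPerm ρ τ h b x = (ρ h x.1, τ (b x.1) x.2) := rfl

lemma wreathMat_eq (h : H) (b : P → K) :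
    wreathMat ρ τ h b = permMat (wreathPerm ρ τ h b) := by
  ext ⟨p, q⟩ ⟨p', q'⟩
  simp only [wreathMat, Matrix.sum_apply, Matrix.kroneckerMap_apply,
    Matrix.single, Matrix.of_apply, permMat, wreathPerm_apply, Prod.mk.injEq,
    Equiv.prodShear_apply, ite_mul, one_mul, zero_mul]
  rw [Finset.sum_eq_single p]
  · by_cases h1 : p' = ρ h p <;> by_cases h2 : q' = τ (b p) q <;>
      simp [h1, h2, eq_comm]
  · intro p0 _ hp0
    simp [hp0]
  · simp

/-- The orbit setoid of the diagonal wreath action on `(P × Q) × (P × Q)`. -/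
def wreathSetoid : Setoid ((P × Q) × (P × Q)) where
  r x y := ∃ (h : H) (b : P → K), (wreathPerm ρ τ h b x.1, wreathPerm ρ τ h b x.2) = y
  iseqv := by
    refine ⟨fun x => ⟨1, fun _ => 1, by simp⟩, ?_, ?_⟩
    · rintro ⟨⟨p1, q1⟩, ⟨p2, q2⟩⟩ y ⟨h, b, rfl⟩
      refine ⟨h⁻¹, fun p => (b (ρ h⁻¹ p))⁻¹, ?_⟩
      simp
    · rintro ⟨⟨p1, q1⟩, ⟨p2, q2⟩⟩ y z ⟨h, b, rfl⟩ ⟨h', b', rfl⟩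
      refine ⟨h' * h, fun p => b' (ρ h p) * b p, ?_⟩
      simp

lemma mem_wreathCommutant_iff (A : Matrix (P × Q) (P × Q) ℝ) :
    A ∈ wreathCommutantSubmodule ρ τ ↔
      ∀ x y, (wreathSetoid ρ τ).r x y → A x.1 x.2 = A y.1 y.2 := by
  simp only [wreathCommutantSubmodule, Submodule.mem_iInf]
  constructor
  · rintro hA x y ⟨h, b, rfl⟩
    have := (mem_ker_comm_iff (wreathPerm ρ τ h b) A).1 (by rw [← wreathMat_eq]; exact hA h b)
    exact (this x.1 x.2).symm
  · intro hA h b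
    rw [wreathMat_eq, mem_ker_comm_iff]
    intro x y
    exact (hA (x, y) (wreathPerm ρ τ h b x, wreathPerm ρ τ h b y) ⟨h, b, rfl⟩).symm

lemma finrank_wreathCommutant :
    Module.finrank ℝ (wreathCommutantSubmodule ρ τ) = Nat.card (Quotient (wreathSetoid ρ τ)) :=
  finrank_eq_card_quot _ _ (mem_wreathCommutant_iff ρ τ)

end Wreath
section Count
variable {H P K Q : Type*} [Group H] [Group K]
    [Fintype P] [DecidableEq P] [Fintype Q] [DecidableEq Q]
    (ρ : H →* Equiv.Perm P) (τ : K →* Equiv.Perm Q)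

/-- Whether a diagonal-orbit class of `P × P` is off-diagonal. -/
def OffDiag : Quotient (pairSetoid ρ) → Prop :=
  Quotient.lift (fun pp : P × P => pp.1 ≠ pp.2) (by
    rintro ⟨p, p'⟩ y ⟨g, rfl⟩
    simp [eq_iff_iff, ne_eq, EmbeddingLike.apply_eq_iff_eq])

/-- The classifying map from wreath-orbit data to either a `K`-class (diagonal case)
or an off-diagonal `H`-class. -/
def wqMap (x : (P × Q) × (P × Q)) :
    Quotient (pairSetoid τ) ⊕ {c : Quotient (pairSetoid ρ) // OffDiag ρ c} :=
  if hp : x.1.1 = x.2.1 then Sum.inl ⟦(x.1.2, x.2.2)⟧ else Sum.inr ⟨⟦(x.1.1, x.2.1)⟧, hp⟩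

lemma wqMap_resp : ∀ x y, (wreathSetoid ρ τ).r x y → wqMap ρ τ x = wqMap ρ τ y := by
  rintro ⟨⟨p, q⟩, ⟨p', q'⟩⟩ y ⟨h, b, rfl⟩
  simp only [wqMap, wreathPerm_apply]
  by_cases hp : p = p'
  · subst hp
    simp only [↓reduceDIte]
    exact congrArg Sum.inl (Quotient.sound ⟨b p, rfl⟩)
  · have hp2 : (ρ h) p ≠ (ρ h) p' := fun e => hp ((ρ h).injective e)
    simp only [hp, hp2, ↓reduceDIte]
    exact congrArg Sum.inr (Subtype.ext (Quotient.sound ⟨h, rfl⟩))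

lemma card_wreath [Nonempty P] [Nonempty Q]
    (hHtrans : ∀ p p' : P, ∃ h : H, ρ h p = p')
    (hKtrans : ∀ q q' : Q, ∃ k : K, τ k q = q') :
    Nat.card (Quotient (wreathSetoid ρ τ)) =
      Nat.card (Quotient (pairSetoid τ)) +
        (Nat.card (Quotient (pairSetoid ρ)) - 1) := by
  classical
  set F : Quotient (wreathSetoid ρ τ) →
      Quotient (pairSetoid τ) ⊕ {c : Quotient (pairSetoid ρ) // OffDiag ρ c} :=
    Quotient.lift (wqMap ρ τ) (wqMap_resp ρ τ) with hF
  have hinj : Function.Injective F := by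
    intro x y
    induction x using Quotient.ind with | _ x =>
    induction y using Quotient.ind with | _ y =>
    obtain ⟨⟨p, q⟩, ⟨p', q'⟩⟩ := x
    obtain ⟨⟨a, r⟩, ⟨a', r'⟩⟩ := y
    intro hxy
    simp only [hF, Quotient.lift_mk] at hxy
    by_cases hp : p = p'
    · by_cases ha : a = a'
      · subst hp; subst ha
        rw [wqMap, wqMap, dif_pos rfl, dif_pos rfl] at hxy
        obtain ⟨k, hk⟩ := Quotient.exact (Sum.inl.inj hxy)
        obtain ⟨h, hh⟩ := hHtrans p a
        refine Quotient.sound ⟨h, fun _ => k, ?_⟩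
        simp only [wreathPerm_apply, Prod.mk.injEq] at hk ⊢
        exact ⟨⟨hh, hk.1⟩, hh, hk.2⟩
      · rw [wqMap, wqMap, dif_pos hp, dif_neg ha] at hxy
        exact absurd hxy (by simp)
    · by_cases ha : a = a'
      · rw [wqMap, wqMap, dif_neg hp, dif_pos ha] at hxy
        exact absurd hxy (by simp)
      · rw [wqMap, wqMap, dif_neg hp, dif_neg ha] at hxy
        obtain ⟨h, hh⟩ := Quotient.exact (Subtype.ext_iff.1 (Sum.inr.inj hxy))
        obtain ⟨k1, hk1⟩ := hKtrans q r
        obtain ⟨k2, hk2⟩ := hKtrans q' r'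
        refine Quotient.sound ⟨h, fun x => if x = p then k1 else k2, ?_⟩
        simp only [Prod.mk.injEq] at hh
        simp only [wreathPerm_apply, Prod.mk.injEq, if_pos rfl,
          if_neg (Ne.symm hp)]
        exact ⟨⟨hh.1, hk1⟩, hh.2, hk2⟩
  have hsurj : Function.Surjective F := by
    rintro (c | ⟨c, hc⟩)
    · induction c using Quotient.ind with | _ x =>
      obtain ⟨q, q'⟩ := x
      obtain ⟨p⟩ := (inferInstance : Nonempty P)
      refine ⟨⟦((p, q), (p, q'))⟧, ?_⟩
      simp only [hF, Quotient.lift_mk]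
      rw [wqMap, dif_pos rfl]
    · induction c using Quotient.ind with | _ x =>
      obtain ⟨p, p'⟩ := x
      obtain ⟨q⟩ := (inferInstance : Nonempty Q)
      have hpp : p ≠ p' := hc
      refine ⟨⟦((p, q), (p', q))⟧, ?_⟩
      simp only [hF, Quotient.lift_mk]
      rw [wqMap, dif_neg hpp]
  have hcard := Nat.card_congr (Equiv.ofBijective F ⟨hinj, hsurj⟩)
  rw [Nat.card_sum] at hcard
  have hone : Nat.card {c : Quotient (pairSetoid ρ) // ¬ OffDiag ρ c} = 1 := by
    rw [Nat.card_eq_one_iff_unique]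
    constructor
    · constructor
      rintro ⟨c, hc⟩ ⟨c', hc'⟩
      refine Subtype.ext ?_
      induction c using Quotient.ind with | _ x =>
      induction c' using Quotient.ind with | _ y =>
      obtain ⟨p, p'⟩ := x
      obtain ⟨a, a'⟩ := y
      have h1 : p' = p := by
        by_contra hne; exact hc fun e => hne e.symm
      have h2 : a' = a := by
        by_contra hne; exact hc' fun e => hne e.symm
      obtain ⟨h, hh⟩ := hHtrans p a
      refine Quotient.sound ⟨h, ?_⟩
      simp [h1, h2, hh]
    · obtain ⟨p⟩ := (inferInstance : Nonempty P)
      exact ⟨⟨⟦(p, p)⟧, fun hne => hne rfl⟩⟩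
  have hsplit : Nat.card {c : Quotient (pairSetoid ρ) // OffDiag ρ c} +
      Nat.card {c : Quotient (pairSetoid ρ) // ¬ OffDiag ρ c} =
      Nat.card (Quotient (pairSetoid ρ)) := by
    rw [← Nat.card_sum]
    exact Nat.card_congr (Equiv.sumCompl _)
  omega

end Count

/-- If the `H`- and `K`-actions are transitive and the spaces of `H`- and `K`-equivariant
maps have dimensions `H` and `K` respectively, then the space of linear maps equivariant to
the imprimitive action of `K ≀ H` has dimension `H + K − 1`. -/
theorem finrank_wreath_commutant
    {H P K Q : Type*} [Group H] [Group K]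
    [Fintype P] [DecidableEq P] [Nonempty P] [Fintype Q] [DecidableEq Q] [Nonempty Q]
    (ρ : H →* Equiv.Perm P) (τ : K →* Equiv.Perm Q)
    (hHtrans : ∀ p p' : P, ∃ h : H, ρ h p = p')
    (hKtrans : ∀ q q' : Q, ∃ k : K, τ k q = q')
    (dH dK : ℕ)
    (hdH : Module.finrank ℝ (commutantSubmodule ρ) = dH)
    (hdK : Module.finrank ℝ (commutantSubmodule τ) = dK) :
    Module.finrank ℝ (wreathCommutantSubmodule ρ τ) = dH + dK - 1 := by
  rw [finrank_commutant] at hdH hdK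
  rw [finrank_wreathCommutant, card_wreath ρ τ hHtrans hKtrans, hdH, hdK]
  have hpos : 0 < Nat.card (Quotient (pairSetoid ρ)) := by
    haveI : Nonempty (Quotient (pairSetoid ρ)) :=
      ⟨⟦(Classical.arbitrary P, Classical.arbitrary P)⟧⟩
    exact Nat.card_pos
  omega
end
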